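/- The monotone contingency logic M^Δ is strongly complete with respect to the class of (m)-frames: every M^Δ-consistent set of formulas is satisfiable at some state of some neighborhood model whose neighborhood function at every state is closed under supersets. -/

import Mathlib

/-- The language L(Δ) of contingency logic: φ ::= p | ¬φ | (φ ∧ φ) | Δφ. -/
inductive Formula (P : Type) : Type
  | atom : P → Formula P
  | neg : Formula P → Formula P
  | and : Formula P → Formula P → Formula P
  | delta : Formula P → Formula P

namespace Formula

variable {P : Type}

/-- φ ∨ ψ abbreviates ¬(¬φ ∧ ¬ψ). -/
def or (φ ψ : Formula P) : Formula P := neg (and (neg φ) (neg ψ))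

/-- φ → ψ abbreviates ¬(φ ∧ ¬ψ). -/
def imp (φ ψ : Formula P) : Formula P := neg (and φ (neg ψ))

/-- φ ↔ ψ abbreviates (φ → ψ) ∧ (ψ → φ). -/
def iffF (φ ψ : Formula P) : Formula P := and (imp φ ψ) (imp ψ φ)

end Formula

/-- ⊤ : a fixed tautology (p ∨ ¬p for a fixed propositional variable p). -/
noncomputable def Formula.top (P : Type) [Nonempty P] : Formula P :=
  Formula.or (Formula.atom (Classical.arbitrary P))
    (Formula.neg (Formula.atom (Classical.arbitrary P)))

/-- A neighborhood model ⟨S, N, V⟩: a nonempty set of states `S`, a neighborhood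
function `N : S → P(P(S))` and a valuation `V`. -/
structure NbhdModel (P : Type) where
  S : Type
  nonempty : Nonempty S
  N : S → Set (Set S)
  V : P → Set S

/-- The truth set ⟦φ⟧ of a formula in a neighborhood model; the clause for `Δφ` says
that a state `s` satisfies `Δφ` iff ⟦φ⟧ ∈ N(s) or S ∖ ⟦φ⟧ ∈ N(s). -/
def NbhdModel.truthSet {P : Type} (M : NbhdModel P) : Formula P → Set M.S
  | .atom p => M.V p
  | .neg φ => (M.truthSet φ)ᶜ
  | .and φ ψ => M.truthSet φ ∩ M.truthSet ψ
  | .delta φ => {s | M.truthSet φ ∈ M.N s ∨ (M.truthSet φ)ᶜ ∈ M.N s}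

/-- Satisfaction: M,s ⊨ φ. -/
def NbhdModel.sat {P : Type} (M : NbhdModel P) (s : M.S) (φ : Formula P) : Prop :=
  s ∈ M.truthSet φ

/-- Frame property (m): closure under supersets. -/
def SupersetClosed {S : Type} (N : S → Set (Set S)) : Prop :=
  ∀ s : S, ∀ X Y : Set S, X ∈ N s → X ⊆ Y → Y ∈ N s

/-- Frame property (c): closure under binary intersections. -/
def InterClosed {S : Type} (N : S → Set (Set S)) : Prop :=
  ∀ s : S, ∀ X Y : Set S, X ∈ N s → Y ∈ N s → X ∩ Y ∈ N s

/-- Frame property (n): contains the unit. -/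
def ContainsUnit {S : Type} (N : S → Set (Set S)) : Prop :=
  ∀ s : S, (Set.univ : Set S) ∈ N s

/-- Frame property (z): closure under complements. -/
def ComplClosed {S : Type} (N : S → Set (Set S)) : Prop :=
  ∀ s : S, ∀ X : Set S, X ∈ N s → Xᶜ ∈ N s

/-- The supplementation of a neighborhood function:
`N⁺(s) = {X ⊆ S : Y ⊆ X for some Y ∈ N(s)}`. -/
def suppN {S : Type} (N : S → Set (Set S)) (s : S) : Set (Set S) :=
  {X | ∃ Y ∈ N s, Y ⊆ X}

/-- `φ` is a substitution instance of a propositional tautology: every Boolean valuation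
of formulas that respects `¬` and `∧` (treating atoms and Δ-formulas as atomic) makes
`φ` true. -/
def Tautology {P : Type} (φ : Formula P) : Prop :=
  ∀ v : Formula P → Bool,
    (∀ ψ, v (Formula.neg ψ) = !(v ψ)) →
    (∀ ψ χ, v (Formula.and ψ χ) = (v ψ && v χ)) →
    v φ = true

/-- Derivability in the system E^Δ (TAUT + ΔEqu + MP + REΔ) extended with the
additional axioms in `Ax`. -/
inductive Deriv {P : Type} (Ax : Set (Formula P)) : Formula P → Prop
  | ax {φ} (h : φ ∈ Ax) : Deriv Ax φ
  | taut {φ} (h : Tautology φ) : Deriv Ax φ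
  | equ (φ) : Deriv Ax (Formula.iffF (Formula.delta φ) (Formula.delta (Formula.neg φ)))
  | mp {φ ψ} (h1 : Deriv Ax (Formula.imp φ ψ)) (h2 : Deriv Ax φ) : Deriv Ax ψ
  | re {φ ψ} (h : Deriv Ax (Formula.iffF φ ψ)) :
      Deriv Ax (Formula.iffF (Formula.delta φ) (Formula.delta ψ))

/-- Derivability of `φ` from the set of premises `Γ` in the system E^Δ + `Ax`. -/
inductive DerivFrom {P : Type} (Ax Γ : Set (Formula P)) : Formula P → Prop
  | mem {φ} (h : φ ∈ Γ) : DerivFrom Ax Γ φ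
  | thm {φ} (h : Deriv Ax φ) : DerivFrom Ax Γ φ
  | mp {φ ψ} (h1 : DerivFrom Ax Γ (Formula.imp φ ψ)) (h2 : DerivFrom Ax Γ φ) :
      DerivFrom Ax Γ ψ

/-- `Γ` is consistent in the system E^Δ + `Ax`: no contradiction is derivable from `Γ`. -/
def Consistent {P : Type} (Ax Γ : Set (Formula P)) : Prop :=
  ¬ ∃ φ : Formula P, DerivFrom Ax Γ φ ∧ DerivFrom Ax Γ (Formula.neg φ)

/-- The axiom ΔM: all instances of Δφ → Δ(φ ∨ ψ) ∨ Δ(¬φ ∨ χ). -/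
def AxDeltaM {P : Type} : Set (Formula P) :=
  {f | ∃ φ ψ χ : Formula P,
     f = Formula.imp (Formula.delta φ)
           (Formula.or (Formula.delta (Formula.or φ ψ))
                       (Formula.delta (Formula.or (Formula.neg φ) χ)))}

/-- The axiom ΔC: all instances of (Δφ ∧ Δψ) → Δ(φ ∧ ψ). -/
def AxDeltaC {P : Type} : Set (Formula P) :=
  {f | ∃ φ ψ : Formula P,
     f = Formula.imp (Formula.and (Formula.delta φ) (Formula.delta ψ))
           (Formula.delta (Formula.and φ ψ))}

/-- The axiom ΔN: Δ⊤. -/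
noncomputable def AxDeltaN (P : Type) [Nonempty P] : Set (Formula P) :=
  {Formula.delta (Formula.top P)}

/- ===== Auxiliary development for the completeness proof ===== -/

namespace MCompleteness

open Formula

variable {P : Type}

/-! ### Tautology lemmas -/

lemma taut_id (φ : Formula P) : Tautology (imp φ φ) := by
  intro v hneg hand
  simp only [Formula.imp, hneg, hand]
  cases h : v φ <;> simp [h]

lemma taut_K (φ ψ : Formula P) : Tautology (imp ψ (imp φ ψ)) := by
  intro v hneg hand
  simp only [Formula.imp, hneg, hand]
  cases h1 : v φ <;> cases h2 : v ψ <;> simp [h1, h2]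

lemma taut_S (φ α β : Formula P) :
    Tautology (imp (imp φ (imp α β)) (imp (imp φ α) (imp φ β))) := by
  intro v hneg hand
  simp only [Formula.imp, hneg, hand]
  cases h1 : v φ <;> cases h2 : v α <;> cases h3 : v β <;> simp [h1, h2, h3]

lemma taut_negIntro (φ ψ : Formula P) :
    Tautology (imp (imp φ ψ) (imp (imp φ (neg ψ)) (neg φ))) := by
  intro v hneg hand
  simp only [Formula.imp, hneg, hand]
  cases h1 : v φ <;> cases h2 : v ψ <;> simp [h1, h2]

lemma taut_and1 (φ ψ : Formula P) : Tautology (imp (Formula.and φ ψ) φ) := by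
  intro v hneg hand
  simp only [Formula.imp, hneg, hand]
  cases h1 : v φ <;> cases h2 : v ψ <;> simp [h1, h2]

lemma taut_and2 (φ ψ : Formula P) : Tautology (imp (Formula.and φ ψ) ψ) := by
  intro v hneg hand
  simp only [Formula.imp, hneg, hand]
  cases h1 : v φ <;> cases h2 : v ψ <;> simp [h1, h2]

lemma taut_and3 (φ ψ : Formula P) : Tautology (imp φ (imp ψ (Formula.and φ ψ))) := by
  intro v hneg hand
  simp only [Formula.imp, hneg, hand]
  cases h1 : v φ <;> cases h2 : v ψ <;> simp [h1, h2]

lemma taut_dneg (φ : Formula P) : Tautology (imp (neg (neg φ)) φ) := by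
  intro v hneg hand
  simp only [Formula.imp, hneg, hand]
  cases h : v φ <;> simp [h]

lemma taut_iff1 (φ ψ : Formula P) : Tautology (imp (iffF φ ψ) (imp φ ψ)) := by
  intro v hneg hand
  simp only [Formula.imp, Formula.iffF, hneg, hand]
  cases h1 : v φ <;> cases h2 : v ψ <;> simp [h1, h2]

lemma taut_iff2 (φ ψ : Formula P) : Tautology (imp (iffF φ ψ) (imp ψ φ)) := by
  intro v hneg hand
  simp only [Formula.imp, Formula.iffF, hneg, hand]
  cases h1 : v φ <;> cases h2 : v ψ <;> simp [h1, h2]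

lemma taut_absorb (ψ φ : Formula P) :
    Tautology (imp (imp ψ φ) (iffF (Formula.or ψ φ) φ)) := by
  intro v hneg hand
  simp only [Formula.imp, Formula.iffF, Formula.or, hneg, hand]
  cases h1 : v φ <;> cases h2 : v ψ <;> simp [h1, h2]

/-! ### Basic derivability lemmas -/

variable {Ax Γ : Set (Formula P)}

lemma derivFrom_mono {Γ' : Set (Formula P)} {φ : Formula P}
    (h : DerivFrom Ax Γ φ) (hsub : Γ ⊆ Γ') : DerivFrom Ax Γ' φ := by
  induction h with
  | mem h => exact .mem (hsub h)
  | thm h => exact .thm h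
  | mp _ _ ih1 ih2 => exact .mp ih1 ih2

/-- The deduction theorem. -/
lemma deduction {φ ψ : Formula P} (h : DerivFrom Ax (insert φ Γ) ψ) :
    DerivFrom Ax Γ (imp φ ψ) := by
  induction h with
  | mem h =>
    rcases Set.mem_insert_iff.mp h with rfl | h
    · exact .thm (.taut (taut_id _))
    · exact .mp (.thm (.taut (taut_K _ _))) (.mem h)
  | thm h => exact .mp (.thm (.taut (taut_K _ _))) (.thm h)
  | @mp α β _ _ ih1 ih2 =>
    exact .mp (.mp (.thm (.taut (taut_S φ α β))) ih1) ih2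

lemma derivFrom_neg_of_inconsistent_insert {φ : Formula P}
    (h : ¬ Consistent Ax (insert φ Γ)) : DerivFrom Ax Γ (neg φ) := by
  rw [Consistent, not_not] at h
  obtain ⟨ψ, h1, h2⟩ := h
  exact .mp (.mp (.thm (.taut (taut_negIntro φ ψ))) (deduction h1)) (deduction h2)

lemma deriv_of_derivFrom_empty {φ : Formula P}
    (h : DerivFrom Ax (∅ : Set (Formula P)) φ) : Deriv Ax φ := by
  induction h with
  | mem h => exact absurd h (Set.notMem_empty _)
  | thm h => exact h
  | mp _ _ ih1 ih2 => exact .mp ih1 ih2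

/-! ### Maximal consistent sets -/

/-- A maximal `Ax`-consistent set. -/
def MCS (Ax : Set (Formula P)) (s : Set (Formula P)) : Prop :=
  Consistent Ax s ∧ ∀ φ, φ ∉ s → ¬ Consistent Ax (insert φ s)

lemma MCS.mem_of_deriv {s : Set (Formula P)} (hs : MCS Ax s) {φ : Formula P}
    (h : DerivFrom Ax s φ) : φ ∈ s := by
  by_contra hφ
  exact hs.1 ⟨φ, h, derivFrom_neg_of_inconsistent_insert (hs.2 φ hφ)⟩

lemma MCS.neg_mem_iff {s : Set (Formula P)} (hs : MCS Ax s) (φ : Formula P) :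
    neg φ ∈ s ↔ φ ∉ s := by
  constructor
  · intro h hφ; exact hs.1 ⟨φ, .mem hφ, .mem h⟩
  · intro h; exact hs.mem_of_deriv (derivFrom_neg_of_inconsistent_insert (hs.2 φ h))

lemma MCS.and_mem_iff {s : Set (Formula P)} (hs : MCS Ax s) (φ ψ : Formula P) :
    Formula.and φ ψ ∈ s ↔ φ ∈ s ∧ ψ ∈ s := by
  constructor
  · intro h
    exact ⟨hs.mem_of_deriv (.mp (.thm (.taut (taut_and1 φ ψ))) (.mem h)),
      hs.mem_of_deriv (.mp (.thm (.taut (taut_and2 φ ψ))) (.mem h))⟩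
  · rintro ⟨h1, h2⟩
    exact hs.mem_of_deriv (.mp (.mp (.thm (.taut (taut_and3 φ ψ))) (.mem h1)) (.mem h2))

lemma MCS.or_mem_iff {s : Set (Formula P)} (hs : MCS Ax s) (φ ψ : Formula P) :
    Formula.or φ ψ ∈ s ↔ φ ∈ s ∨ ψ ∈ s := by
  unfold Formula.or
  rw [hs.neg_mem_iff, hs.and_mem_iff, hs.neg_mem_iff, hs.neg_mem_iff]
  tauto

/-! ### Lindenbaum -/

lemma derivFrom_finite {φ : Formula P} (h : DerivFrom Ax Γ φ) :
    ∃ Γ₀ : Set (Formula P), Γ₀ ⊆ Γ ∧ Γ₀.Finite ∧ DerivFrom Ax Γ₀ φ := by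
  induction h with
  | @mem ψ h =>
    exact ⟨{ψ}, Set.singleton_subset_iff.mpr h, Set.finite_singleton _, .mem rfl⟩
  | thm h => exact ⟨∅, Set.empty_subset _, Set.finite_empty, .thm h⟩
  | mp _ _ ih1 ih2 =>
    obtain ⟨A, hA, hAf, dA⟩ := ih1
    obtain ⟨B, hB, hBf, dB⟩ := ih2
    exact ⟨A ∪ B, Set.union_subset hA hB, hAf.union hBf,
      .mp (derivFrom_mono dA Set.subset_union_left) (derivFrom_mono dB Set.subset_union_right)⟩

lemma chain_finite_subset {c : Set (Set (Formula P))} (hc : IsChain (· ⊆ ·) c)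
    (hne : c.Nonempty) {F : Set (Formula P)} (hF : F.Finite) (hsub : F ⊆ ⋃₀ c) :
    ∃ t ∈ c, F ⊆ t := by
  revert hsub
  refine Set.Finite.induction_on (motive := fun F _ => F ⊆ ⋃₀ c → ∃ t ∈ c, F ⊆ t) F hF
    (fun _ => ⟨hne.choose, hne.choose_spec, Set.empty_subset _⟩) ?_
  intro a F ha hFfin ih hsub
  · obtain ⟨t, htc, htF⟩ := ih ((Set.subset_insert a F).trans hsub)
    obtain ⟨u, huc, hau⟩ := hsub (Set.mem_insert a F)
    rcases hc.total htc huc with h | h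
    · exact ⟨u, huc, Set.insert_subset hau (htF.trans h)⟩
    · exact ⟨t, htc, Set.insert_subset (h hau) htF⟩

lemma lindenbaum (hcon : Consistent Ax Γ) : ∃ s, Γ ⊆ s ∧ MCS Ax s := by
  obtain ⟨m, hm, hmax⟩ := zorn_subset_nonempty {t : Set (Formula P) | Consistent Ax t}
    (fun c hcS hchain hne => by
      refine ⟨⋃₀ c, ?_, fun t ht => Set.subset_sUnion_of_mem ht⟩
      rintro ⟨φ, h1, h2⟩
      obtain ⟨A, hA, hAf, dA⟩ := derivFrom_finite h1
      obtain ⟨B, hB, hBf, dB⟩ := derivFrom_finite h2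
      obtain ⟨t, htc, htF⟩ := chain_finite_subset hchain hne (hAf.union hBf)
        (Set.union_subset hA hB)
      exact hcS htc ⟨φ, derivFrom_mono dA ((Set.subset_union_left).trans htF),
        derivFrom_mono dB ((Set.subset_union_right).trans htF)⟩) Γ hcon
  refine ⟨m, hm, hmax.1, fun φ hφ hc => hφ ?_⟩
  have : insert φ m ⊆ m := hmax.2 hc (Set.subset_insert φ m)
  exact this (Set.mem_insert φ m)

/-! ### Proof sets -/

/-- The proof set of `φ`: all MCS containing `φ`. -/
def pset (Ax : Set (Formula P)) (φ : Formula P) : Set {s : Set (Formula P) // MCS Ax s} :=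
  {t | φ ∈ t.1}

lemma pset_neg (Ax : Set (Formula P)) (φ : Formula P) :
    pset Ax (neg φ) = (pset Ax φ)ᶜ := by
  ext t
  exact t.2.neg_mem_iff φ

lemma deriv_imp_of_pset_subset {φ ψ : Formula P}
    (h : pset Ax φ ⊆ pset Ax ψ) : Deriv Ax (imp φ ψ) := by
  by_contra hd
  have hcon : Consistent Ax (insert (neg ψ) {φ}) := by
    intro hc
    apply hd
    have d1 : DerivFrom Ax {φ} (neg (neg ψ)) := derivFrom_neg_of_inconsistent_insert (not_not_intro hc)
    have d2 : DerivFrom Ax {φ} ψ := .mp (.thm (.taut (taut_dneg ψ))) d1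
    have d3 : DerivFrom Ax (∅ : Set (Formula P)) (imp φ ψ) := by
      have : ({φ} : Set (Formula P)) = insert φ ∅ := by simp
      exact deduction (this ▸ d2)
    exact deriv_of_derivFrom_empty d3
  obtain ⟨t, htsub, htm⟩ := lindenbaum hcon
  have hφ : φ ∈ t := htsub (Set.mem_insert_of_mem _ rfl)
  have hnψ : neg ψ ∈ t := htsub (Set.mem_insert _ _)
  have hψ : ψ ∈ t := h (show (⟨t, htm⟩ : {s // MCS Ax s}) ∈ pset Ax φ from hφ)
  exact ((htm.neg_mem_iff ψ).mp hnψ) hψ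

lemma deriv_iff_mp {φ ψ : Formula P} (h : Deriv Ax (iffF φ ψ)) : Deriv Ax (imp φ ψ) :=
  .mp (.taut (taut_iff1 φ ψ)) h

lemma deriv_iff_mpr {φ ψ : Formula P} (h : Deriv Ax (iffF φ ψ)) : Deriv Ax (imp ψ φ) :=
  .mp (.taut (taut_iff2 φ ψ)) h

/-! ### The canonical model for M^Δ -/

/-- The canonical neighborhood model for `M^Δ` (already supplemented). -/
def canModel (P : Type) (hne : Nonempty {s : Set (Formula P) // MCS AxDeltaM s}) :
    NbhdModel P where
  S := {s : Set (Formula P) // MCS AxDeltaM s}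
  nonempty := hne
  N := fun s => {X | ∃ φ : Formula P, pset AxDeltaM φ ⊆ X ∧
    ∀ χ : Formula P, Formula.delta (Formula.or φ χ) ∈ s.1}
  V := fun p => {s | Formula.atom p ∈ s.1}

set_option maxHeartbeats 1000000 in
/-- The truth lemma for the canonical model. -/
lemma truth_lemma (hne : Nonempty {s : Set (Formula P) // MCS AxDeltaM s})
    (φ : Formula P) :
    (canModel P hne).truthSet φ = pset AxDeltaM φ := by
  induction φ with
  | atom p => rfl
  | neg φ ih =>
    show ((canModel P hne).truthSet φ)ᶜ = _
    rw [ih]; exact (pset_neg _ _).symm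
  | and φ ψ ih1 ih2 =>
    show (canModel P hne).truthSet φ ∩ (canModel P hne).truthSet ψ = _
    rw [ih1, ih2]
    ext t
    exact (t.2.and_mem_iff φ ψ).symm
  | delta φ ih =>
    show {s | (canModel P hne).truthSet φ ∈ (canModel P hne).N s ∨
        ((canModel P hne).truthSet φ)ᶜ ∈ (canModel P hne).N s} = _
    rw [ih, show ((pset AxDeltaM φ)ᶜ : Set (canModel P hne).S) = pset AxDeltaM (neg φ) from
      (pset_neg _ _).symm]
    ext s
    simp only [Set.mem_setOf_eq]
    constructor
    · rintro (⟨ψ, hsub, hall⟩ | ⟨ψ, hsub, hall⟩)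
      · -- pset ψ ⊆ pset φ, Δ(ψ ∨ χ) ∈ s for all χ ⟹ Δφ ∈ s
        have himp : Deriv AxDeltaM (imp ψ φ) := deriv_imp_of_pset_subset hsub
        have hiff : Deriv AxDeltaM (iffF (Formula.or ψ φ) φ) :=
          .mp (.taut (taut_absorb ψ φ)) himp
        have hre : Deriv AxDeltaM (iffF (delta (Formula.or ψ φ)) (delta φ)) := .re hiff
        exact s.2.mem_of_deriv (.mp (.thm (deriv_iff_mp hre)) (.mem (hall φ)))
      · -- pset ψ ⊆ pset (¬φ) ⟹ Δ(¬φ) ∈ s ⟹ Δφ ∈ s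
        have himp : Deriv AxDeltaM (imp ψ (neg φ)) := deriv_imp_of_pset_subset hsub
        have hiff : Deriv AxDeltaM (iffF (Formula.or ψ (neg φ)) (neg φ)) :=
          .mp (.taut (taut_absorb ψ (neg φ))) himp
        have hre : Deriv AxDeltaM (iffF (delta (Formula.or ψ (neg φ))) (delta (neg φ))) :=
          .re hiff
        have hdn : delta (neg φ) ∈ s.1 :=
          s.2.mem_of_deriv (.mp (.thm (deriv_iff_mp hre)) (.mem (hall (neg φ))))
        exact s.2.mem_of_deriv (.mp (.thm (deriv_iff_mpr (Deriv.equ φ))) (.mem hdn))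
    · intro hδ
      by_cases hall : ∀ χ : Formula P, delta (Formula.or φ χ) ∈ s.1
      · exact Or.inl ⟨φ, subset_rfl, hall⟩
      by_cases hall2 : ∀ χ : Formula P, delta (Formula.or (neg φ) χ) ∈ s.1
      · exact Or.inr ⟨neg φ, subset_rfl, hall2⟩
      exfalso
      push_neg at hall hall2
      obtain ⟨ψ, hψ⟩ := hall
      obtain ⟨χ, hχ⟩ := hall2
      have hax : Deriv AxDeltaM (imp (delta φ)
          (Formula.or (delta (Formula.or φ ψ)) (delta (Formula.or (neg φ) χ)))) :=
        .ax ⟨φ, ψ, χ, rfl⟩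
      have hor : Formula.or (delta (Formula.or φ ψ)) (delta (Formula.or (neg φ) χ)) ∈ s.1 :=
        s.2.mem_of_deriv (.mp (.thm hax) (.mem hδ))
      rcases (s.2.or_mem_iff _ _).mp hor with h | h
      · exact hψ h
      · exact hχ h

end MCompleteness

/-- the monotone contingency logic M^Δ = E^Δ + ΔM is strongly complete
with respect to the class of (m)-frames: every M^Δ-consistent set of formulas is
satisfiable at some state of some neighborhood model whose neighborhood function at
every state is closed under supersets. -/
theorem M_strongly_complete {P : Type} [Nonempty P]
    (Γ : Set (Formula P)) (hcon : Consistent AxDeltaM Γ) :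
    ∃ (M : NbhdModel P) (s : M.S), SupersetClosed M.N ∧ ∀ φ ∈ Γ, M.sat s φ := by
  obtain ⟨s0, hsub, hmcs⟩ := MCompleteness.lindenbaum hcon
  have hne : Nonempty {s : Set (Formula P) // MCompleteness.MCS AxDeltaM s} := ⟨⟨s0, hmcs⟩⟩
  refine ⟨MCompleteness.canModel P hne, ⟨s0, hmcs⟩, ?_, ?_⟩
  · rintro s X Y ⟨φ, h1, h2⟩ hXY
    exact ⟨φ, h1.trans hXY, h2⟩
  · intro φ hφ
    show _ ∈ (MCompleteness.canModel P hne).truthSet φ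
    rw [MCompleteness.truth_lemma hne φ]
    exact hsub hφ
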